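/- Let n be a positive integer, 1 ≤ i < j ≤ n, let o ∈ S_n be the n-cycle with o(i) = i+1 for 1 ≤ i ≤ n−1 and o(n) = 1, and let w ∈ S_n with w(i) = n. If ℓ(w·s_{ij}) = ℓ(w) + 1 or ℓ(w·s_{ij}) = ℓ(w) − 2(j−i) + 1, then in fact ℓ(w·s_{ij}) = ℓ(w) − 2(j−i) + 1 and ℓ((o∘w)·s_{ij}) = ℓ(o∘w) + 1. -/
import Mathlib


/-- The length (number of inversions) of a permutation of `{1,…,n}`
(modeled as `Fin n`): the number of pairs `a < b` with `w a > w b`. -/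
def invLen {n : ℕ} (w : Equiv.Perm (Fin n)) : ℕ :=
  (Finset.univ.filter fun p : Fin n × Fin n => p.1 < p.2 ∧ w p.2 < w p.1).card

open Finset

lemma invLen_eq_sum {n : ℕ} (u : Equiv.Perm (Fin n)) :
    (invLen u : ℤ) = ∑ p ∈ univ.filter (fun p : Fin n × Fin n => p.1 < p.2),
      (if u p.2 < u p.1 then (1:ℤ) else 0) := by
  rw [Finset.sum_boole, Finset.filter_filter, invLen]

lemma invLen_mul_swap {n : ℕ} (u : Equiv.Perm (Fin n)) {i j : Fin n} (hij : i < j) :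
    (invLen (u * Equiv.swap i j) : ℤ) = (invLen u : ℤ)
      + (∑ k ∈ Finset.Ioo i j,
          (((if u i < u k then (1:ℤ) else 0) - (if u k < u i then 1 else 0))
            + ((if u k < u j then (1:ℤ) else 0) - (if u j < u k then 1 else 0))))
      + ((if u i < u j then (1:ℤ) else 0) - (if u j < u i then 1 else 0)) := by
  classical
  set s := Equiv.swap i j with hs
  have hsii : ∀ a, s (s a) = a := fun a => Equiv.swap_apply_self i j a
  have hsne : ∀ a b : Fin n, a ≠ b → s a ≠ s b := fun a b h e => h (s.injective e)
  set S := univ.filter (fun p : Fin n × Fin n => p.1 < p.2) with hS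
  have hmemS : ∀ p : Fin n × Fin n, p ∈ S ↔ p.1 < p.2 := by
    intro p; simp [hS]
  set σ : Fin n × Fin n → Fin n × Fin n :=
    fun p => if s p.1 < s p.2 then (s p.1, s p.2) else (s p.2, s p.1) with hσ
  have hmaps : ∀ p ∈ S, σ p ∈ S := by
    intro p hp
    rw [hmemS] at hp ⊢
    by_cases h1 : s p.1 < s p.2
    · simp [hσ, h1]
    · have : s p.2 < s p.1 := (not_lt.mp h1).lt_of_ne (hsne _ _ hp.ne')
      simp [hσ, h1, this]
  have hinv : ∀ p ∈ S, σ (σ p) = p := by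
    intro p hp
    rw [hmemS] at hp
    by_cases h1 : s p.1 < s p.2
    · have h2 : s (s p.1) < s (s p.2) := by rw [hsii, hsii]; exact hp
      simp only [hσ, h1, if_pos, if_true]
      rw [if_pos h2, hsii, hsii]
    · have h2 : ¬ s (s p.2) < s (s p.1) := by rw [hsii, hsii]; exact not_lt.mpr hp.le
      simp only [hσ, h1, if_false, if_neg h1]
      rw [if_neg h2, hsii, hsii]
  have key : (invLen (u * s) : ℤ)
      = ∑ p ∈ S, (if s p.1 < s p.2 then (if u p.2 < u p.1 then (1:ℤ) else 0)
          else (if u p.1 < u p.2 then (1:ℤ) else 0)) := by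
    rw [invLen_eq_sum, ← hS]
    refine (Finset.sum_nbij' σ σ hmaps hmaps hinv hinv ?_).symm
    intro p hp
    by_cases h1 : s p.1 < s p.2
    · simp [hσ, h1, Equiv.Perm.mul_apply, hsii]
    · simp [hσ, h1, Equiv.Perm.mul_apply, hsii]
  have e1 : (invLen u : ℤ) = ∑ p ∈ S, (if u p.2 < u p.1 then (1:ℤ) else 0) := by
    rw [invLen_eq_sum, ← hS]
  have e2 : ∑ p ∈ S.filter (fun p => ¬ s p.1 < s p.2),
        ((if u p.1 < u p.2 then (1:ℤ) else 0) - (if u p.2 < u p.1 then 1 else 0))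
      = ∑ p ∈ S, (if ¬ s p.1 < s p.2 then
          ((if u p.1 < u p.2 then (1:ℤ) else 0) - (if u p.2 < u p.1 then 1 else 0)) else 0) :=
    Finset.sum_filter _ _
  have diff : (invLen (u * s) : ℤ) - invLen u
      = ∑ p ∈ S.filter (fun p => ¬ s p.1 < s p.2),
          ((if u p.1 < u p.2 then (1:ℤ) else 0) - (if u p.2 < u p.1 then 1 else 0)) := by
    rw [key, e1, ← Finset.sum_sub_distrib, e2]
    refine Finset.sum_congr rfl fun p hp => ?_
    by_cases h1 : s p.1 < s p.2 <;> simp [h1]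
  have hT : S.filter (fun p => ¬ s p.1 < s p.2)
      = insert ((i : Fin n), j)
          (((Finset.Ioo i j).image fun k => (i, k)) ∪ ((Finset.Ioo i j).image fun k => (k, j))) := by
    ext p
    obtain ⟨a, b⟩ := p
    simp only [mem_filter, mem_insert, mem_union, mem_image, mem_Ioo, hmemS]
    constructor
    · rintro ⟨hab, hnlt⟩
      by_cases hai : a = i
      · subst hai
        by_cases hbj : b = j
        · subst hbj; exact Or.inl rfl
        · have hsb : s b = b := Equiv.swap_apply_of_ne_of_ne hab.ne' hbj
          rw [hs, hsb, Equiv.swap_apply_left] at hnlt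
          exact Or.inr (Or.inl ⟨b, ⟨hab, (not_lt.mp hnlt).lt_of_ne hbj⟩, rfl⟩)
      · by_cases haj : a = j
        · subst haj
          have hb1 := (hij.trans hab).ne'
          have hb2 := hab.ne'
          rw [hs, Equiv.swap_apply_right, Equiv.swap_apply_of_ne_of_ne hb1 hb2] at hnlt
          exact absurd (hij.trans hab) hnlt
        · have hsa : s a = a := Equiv.swap_apply_of_ne_of_ne hai haj
          by_cases hbi : b = i
          · subst hbi
            rw [hs, hsa, Equiv.swap_apply_left] at hnlt
            exact absurd (hab.trans hij) hnlt
          · by_cases hbj : b = j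
            · subst hbj
              rw [hs, hsa, Equiv.swap_apply_right] at hnlt
              exact Or.inr (Or.inr ⟨a, ⟨lt_of_le_of_ne (not_lt.mp hnlt) (Ne.symm hai), hab⟩, rfl⟩)
            · rw [hs, hsa, Equiv.swap_apply_of_ne_of_ne hbi hbj] at hnlt
              exact absurd hab hnlt
    · rintro (he | ⟨k, ⟨h1, h2⟩, he⟩ | ⟨k, ⟨h1, h2⟩, he⟩) <;>
        rw [Prod.mk.injEq] at he <;> obtain ⟨rfl, rfl⟩ := he
      · exact ⟨hij, by rw [hs, Equiv.swap_apply_left, Equiv.swap_apply_right]; exact not_lt.mpr hij.le⟩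
      · refine ⟨h1, ?_⟩
        rw [hs, Equiv.swap_apply_left, Equiv.swap_apply_of_ne_of_ne h1.ne' h2.ne]
        exact not_lt.mpr h2.le
      · refine ⟨h2, ?_⟩
        rw [hs, Equiv.swap_apply_right, Equiv.swap_apply_of_ne_of_ne h1.ne' h2.ne]
        exact not_lt.mpr h1.le
  have hne : ((i, j) : Fin n × Fin n)
      ∉ (((Finset.Ioo i j).image fun k => (i, k)) ∪ ((Finset.Ioo i j).image fun k => (k, j))) := by
    intro hmem
    rcases mem_union.mp hmem with hm | hm <;> obtain ⟨k, hk, he⟩ := mem_image.mp hm <;>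
      rw [Prod.mk.injEq] at he
    · exact absurd (mem_Ioo.mp hk).2 (by rw [he.2]; exact lt_irrefl j)
    · exact absurd (mem_Ioo.mp hk).1 (by rw [he.1]; exact lt_irrefl i)
  have hdisj : Disjoint ((Finset.Ioo i j).image fun k => (i, k))
      ((Finset.Ioo i j).image fun k => (k, j)) := by
    rw [Finset.disjoint_left]
    rintro p hp1 hp2
    obtain ⟨k, hk, rfl⟩ := mem_image.mp hp1
    obtain ⟨k', hk', he⟩ := mem_image.mp hp2
    rw [Prod.mk.injEq] at he
    exact absurd (mem_Ioo.mp hk').1 (by rw [he.1]; exact lt_irrefl i)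
  rw [hT, Finset.sum_insert hne, Finset.sum_union hdisj, Finset.sum_image ?inj1,
    Finset.sum_image ?inj2] at diff
  case inj1 => intro x _ y _ h; exact ((Prod.mk.injEq _ _ _ _).mp h).2
  case inj2 => intro x _ y _ h; exact ((Prod.mk.injEq _ _ _ _).mp h).1
  rw [Finset.sum_add_distrib]
  linarith [diff]


/-- Let `o` be the cyclic shift `o(i) = i + 1 (mod n)`, `1 ≤ i < j ≤ n`, and
`w ∈ S_n` with `w(i) = n` (the top value `n` is modeled by the top element
`n−1` of `Fin n`).  If `ℓ(w·s_{ij}) = ℓ(w) + 1` or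
`ℓ(w·s_{ij}) = ℓ(w) − 2(j−i) + 1`, then in fact
`ℓ(w·s_{ij}) = ℓ(w) − 2(j−i) + 1` and `ℓ((o∘w)·s_{ij}) = ℓ(o∘w) + 1`. -/
theorem length_conditions_of_apply_left_eq_top
    (n : ℕ) (hn : 0 < n) (o : Equiv.Perm (Fin n))
    (ho : ∀ a : Fin n, (o a : ℕ) = ((a : ℕ) + 1) % n)
    (i j : Fin n) (hij : i < j) (w : Equiv.Perm (Fin n))
    (hwi : (w i : ℕ) = n - 1)
    (h : (invLen (w * Equiv.swap i j) : ℤ) = (invLen w : ℤ) + 1 ∨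
        (invLen (w * Equiv.swap i j) : ℤ)
          = (invLen w : ℤ) - 2 * ((j : ℤ) - (i : ℤ)) + 1) :
    (invLen (w * Equiv.swap i j) : ℤ)
        = (invLen w : ℤ) - 2 * ((j : ℤ) - (i : ℤ)) + 1 ∧
      (invLen ((o * w) * Equiv.swap i j) : ℤ) = (invLen (o * w) : ℤ) + 1 := by
  classical
  -- w i is the maximum
  have hmax : ∀ k : Fin n, k ≠ i → w k < w i := by
    intro k hk
    have h1 : w k ≠ w i := fun e => hk (w.injective e)
    have h2 : (w k : ℕ) < n := (w k).isLt
    have h3 : (w k : ℕ) ≠ (w i : ℕ) := fun e => h1 (Fin.ext e)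
    rw [Fin.lt_def]
    omega
  -- formula for w
  have hw := invLen_mul_swap w hij
  have hsum : ∀ k ∈ Finset.Ioo i j,
      (((if w i < w k then (1:ℤ) else 0) - (if w k < w i then 1 else 0))
        + ((if w k < w j then (1:ℤ) else 0) - (if w j < w k then 1 else 0)))
      = (if w j < w k then (-2 : ℤ) else 0) := by
    intro k hk
    obtain ⟨hik, hkj⟩ := Finset.mem_Ioo.mp hk
    have h1 : w k < w i := hmax k hik.ne'
    have h2 : w k ≠ w j := fun e => hkj.ne (w.injective e)
    rw [if_neg (asymm h1), if_pos h1]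
    by_cases h3 : w j < w k
    · rw [if_neg (asymm h3), if_pos h3, if_pos h3]; ring
    · have h4 : w k < w j := (not_lt.mp h3).lt_of_ne h2
      rw [if_pos h4, if_neg h3, if_neg h3]; ring
  rw [Finset.sum_congr rfl hsum, if_neg (asymm (hmax j hij.ne')), if_pos (hmax j hij.ne')] at hw
  set m := ((Finset.Ioo i j).filter fun k => w j < w k).card with hm
  have hsum2 : ∑ k ∈ Finset.Ioo i j, (if w j < w k then (-2 : ℤ) else 0) = -2 * m := by
    rw [Finset.sum_ite, Finset.sum_const, Finset.sum_const, hm]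
    simp; ring
  rw [hsum2] at hw
  -- hw : invLen (w * swap) = invLen w + (-2 * m) + (0 - 1)
  have hcard : ((Finset.Ioo i j).card : ℤ) = (j : ℤ) - i - 1 := by
    rw [Fin.card_Ioo]
    have : (i : ℕ) < (j : ℕ) := hij
    omega
  have hmle : m ≤ (Finset.Ioo i j).card := Finset.card_filter_le _ _
  -- rule out the first case
  have hmain : (invLen (w * Equiv.swap i j) : ℤ)
      = (invLen w : ℤ) - 2 * ((j : ℤ) - (i : ℤ)) + 1 := by
    rcases h with h | h
    · omega
    · exact h
  -- deduce m = card Ioo, hence all k in Ioo have w j < w k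
  have hmeq : m = (Finset.Ioo i j).card := by omega
  have hall : ∀ k ∈ Finset.Ioo i j, w j < w k := by
    have := Finset.eq_of_subset_of_card_le (Finset.filter_subset _ _) (le_of_eq hmeq.symm)
    intro k hk
    rw [← this] at hk
    exact (Finset.mem_filter.mp hk).2
  refine ⟨hmain, ?_⟩
  -- now the o * w part
  set u := o * w with hu
  have hui : (u i : ℕ) = 0 := by
    rw [hu, Equiv.Perm.mul_apply, ho, hwi, Nat.sub_add_cancel hn, Nat.mod_self]
  have hmin : ∀ k : Fin n, k ≠ i → u i < u k := by
    intro k hk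
    have h1 : u k ≠ u i := fun e => hk (u.injective e)
    have h3 : (u k : ℕ) ≠ (u i : ℕ) := fun e => h1 (Fin.ext e)
    rw [Fin.lt_def]
    omega
  have hshift : ∀ k : Fin n, k ≠ i → (u k : ℕ) = (w k : ℕ) + 1 := by
    intro k hk
    have h1 : w k < w i := hmax k hk
    have h2 : (w k : ℕ) < n - 1 := by rw [← hwi]; exact h1
    rw [hu, Equiv.Perm.mul_apply, ho]
    have : (w k : ℕ) + 1 < n := by omega
    exact Nat.mod_eq_of_lt this
  have hu2 := invLen_mul_swap u hij
  have hsum3 : ∀ k ∈ Finset.Ioo i j,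
      (((if u i < u k then (1:ℤ) else 0) - (if u k < u i then 1 else 0))
        + ((if u k < u j then (1:ℤ) else 0) - (if u j < u k then 1 else 0)))
      = 0 := by
    intro k hk
    obtain ⟨hik, hkj⟩ := Finset.mem_Ioo.mp hk
    have h1 : u i < u k := hmin k hik.ne'
    have h2 : u j < u k := by
      rw [Fin.lt_def, hshift k hik.ne', hshift j hij.ne']
      have := hall k hk
      rw [Fin.lt_def] at this
      omega
    rw [if_pos h1, if_neg (asymm h1), if_neg (asymm h2), if_pos h2]
    ring
  rw [Finset.sum_congr rfl hsum3, Finset.sum_const, if_pos (hmin j hij.ne'),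
    if_neg (asymm (hmin j hij.ne'))] at hu2
  rw [hu2]
  simp
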